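/- Let L ≥ 1, n ≥ 2, d ≥ 1, and let p_1, …, p_n ∈ ℂ[z_1, …, z_L] be linearly independent homogeneous polynomials, all of degree d. Suppose that p_1, …, p_{n−1} form a regular sequence in ℂ[z_1, …, z_L] and that the ideal (p_1, …, p_{n−1}) is a prime ideal. Then p_1, …, p_n form a regular sequence in ℂ[z_1, …, z_L]. -/

import Mathlib

open MvPolynomial in
theorem aux_homogeneousComponent_mul (σ : Type*) (d : ℕ) (c f : MvPolynomial σ ℂ)
    (hf : f.IsHomogeneous d) :
    homogeneousComponent d (c * f) = C (coeff 0 c) * f := by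
  conv_lhs => rw [← sum_homogeneousComponent c, Finset.sum_mul, map_sum]
  rw [Finset.sum_eq_single 0]
  · rw [homogeneousComponent_of_mem (n := 0 + d)
      ((mem_homogeneousSubmodule _ _).mpr ((homogeneousComponent_isHomogeneous 0 c).mul hf)),
      if_pos (by omega), homogeneousComponent_zero]
  · intro k _ hk
    rw [homogeneousComponent_of_mem (n := k + d)
      ((mem_homogeneousSubmodule _ _).mpr ((homogeneousComponent_isHomogeneous k c).mul hf)),
      if_neg (by omega)]
  · intro h
    simp at h

open MvPolynomial in
theorem aux_span_of_homog {σ : Type*} {m d : ℕ} (f : Fin m → MvPolynomial σ ℂ)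
    (hf : ∀ i, (f i).IsHomogeneous d) {q : MvPolynomial σ ℂ} (hq : q.IsHomogeneous d)
    (h : q ∈ Ideal.span (Set.range f)) : q ∈ Submodule.span ℂ (Set.range f) := by
  obtain ⟨c, rfl⟩ := (Ideal.mem_span_range_iff_exists_fun).mp h
  have : homogeneousComponent d (∑ i, c i * f i) = ∑ i, c i * f i :=
    homogeneousComponent_of_mem ((mem_homogeneousSubmodule _ _).mpr hq) |>.trans (if_pos rfl)
  rw [← this, map_sum]
  refine Submodule.sum_mem _ fun i _ => ?_
  rw [aux_homogeneousComponent_mul σ d (c i) (f i) (hf i),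
    show (C (coeff 0 (c i)) : MvPolynomial σ ℂ) * f i = coeff 0 (c i) • f i from
      (smul_eq_C_mul _ _).symm]
  exact Submodule.smul_mem _ _ (Submodule.subset_span ⟨i, rfl⟩)

/-- **Proposition 10.2.**
Let `p 0, …, p n` (with `n ≥ 1`, so at least two polynomials) be linearly
independent homogeneous polynomials of the same degree `d ≥ 1` in
`ℂ[z_1,…,z_L]`.  If the first `n` of them form a regular sequence generating a
prime ideal, then all `n + 1` of them form a regular sequence. -/
theorem stmt11 (L n d : ℕ) (hL : 1 ≤ L) (hn : 1 ≤ n) (hd : 1 ≤ d)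
    (p : Fin (n + 1) → MvPolynomial (Fin L) ℂ)
    (hhom : ∀ i, (p i).IsHomogeneous d)
    (hlin : LinearIndependent ℂ p)
    (hreg : RingTheory.Sequence.IsRegular (MvPolynomial (Fin L) ℂ)
      (List.ofFn fun i : Fin n => p i.castSucc))
    (hprime : (Ideal.span (Set.range fun i : Fin n => p i.castSucc)).IsPrime) :
    RingTheory.Sequence.IsRegular (MvPolynomial (Fin L) ℂ) (List.ofFn p) := by
  classical
  open MvPolynomial RingTheory.Sequence in
  set I : Ideal (MvPolynomial (Fin L) ℂ) :=
    Ideal.span (Set.range fun i : Fin n => p i.castSucc) with hI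
  set rs : List (MvPolynomial (Fin L) ℂ) := List.ofFn fun i : Fin n => p i.castSucc with hrs
  have hofList : Ideal.ofList rs = I := by
    rw [hrs, hI]
    unfold Ideal.ofList
    congr 1
    exact Set.ext fun x => List.mem_ofFn
  have hsplit : List.ofFn p = rs ++ [p (Fin.last n)] := by
    rw [hrs, List.ofFn_succ', List.concat_eq_append]
  have hqI : p (Fin.last n) ∉ I := by
    intro hmem
    have hsp := aux_span_of_homog (fun i : Fin n => p i.castSucc)
      (fun i => hhom i.castSucc) (hhom (Fin.last n)) hmem
    have hp : p = Fin.snoc (fun i : Fin n => p i.castSucc) (p (Fin.last n)) := by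
      funext j
      refine Fin.lastCases ?_ (fun i => ?_) j <;> simp
    rw [hp] at hlin
    exact (linearIndependent_fin_snoc.mp hlin).2 hsp
  rw [RingTheory.Sequence.isRegular_iff, hsplit]
  constructor
  · rw [RingTheory.Sequence.isWeaklyRegular_append_iff,
      RingTheory.Sequence.isWeaklyRegular_singleton_iff, hofList, smul_eq_mul, Ideal.mul_top]
    refine ⟨hreg.toIsWeaklyRegular, ?_⟩
    intro a b hab
    obtain ⟨x, rfl⟩ := Submodule.Quotient.mk_surjective _ a
    obtain ⟨y, rfl⟩ := Submodule.Quotient.mk_surjective _ b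
    simp only [← Submodule.Quotient.mk_smul, Submodule.Quotient.eq] at hab
    rw [Submodule.Quotient.eq]
    have hmul : p (Fin.last n) * (x - y) ∈ I := by
      rw [mul_sub]; simpa [smul_eq_mul] using hab
    rcases hprime.mem_or_mem hmul with h | h
    · exact absurd h hqI
    · exact h
  · intro hcontr
    rw [smul_eq_mul, Ideal.mul_top] at hcontr
    have h1 : (1 : MvPolynomial (Fin L) ℂ) ∈ Ideal.ofList (rs ++ [p (Fin.last n)]) := by
      rw [← hcontr]; trivial
    have hle : Ideal.ofList (rs ++ [p (Fin.last n)]) ≤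
        RingHom.ker (constantCoeff : MvPolynomial (Fin L) ℂ →+* ℂ) := by
      rw [Ideal.ofList, Ideal.span_le]
      intro x hx
      rw [← hsplit] at hx
      obtain ⟨i, rfl⟩ := (List.mem_ofFn).mp hx
      simp only [SetLike.mem_coe, RingHom.mem_ker, constantCoeff_eq]
      exact (hhom i).coeff_eq_zero (by simp; omega)
    have := hle h1
    rw [RingHom.mem_ker, map_one] at this
    exact one_ne_zero this
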